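/- Uniqueness in the division lemma: with h quasi-homogeneous of degree δ with isolated singularity and X₀ = δ^{-1}X_h, if a·h = −X₀(b) for formal power series a, b, then a lies in the image of the derivation X₀ on ℂ[[x,y]]. -/

import Mathlib

set_option maxHeartbeats 1000000
set_option synthInstance.maxHeartbeats 1000000
noncomputable section

/-- The ring of formal power series in two variables over ℂ. -/
abbrev A2 := MvPowerSeries (Fin 2) ℂ

/-- Coefficient-wise partial derivative of a formal power series. -/
def pd (i : Fin 2) (f : A2) : A2 :=
  fun m => (((m i : ℕ) + 1 : ℕ) : ℂ) * MvPowerSeries.coeff (m + Finsupp.single i 1) f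

/-- The weighted radial derivation `R = p₁ x ∂_x + p₂ y ∂_y` on formal power series. -/
def Rder (p₁ p₂ : ℕ) (f : A2) : A2 :=
  (p₁ : ℂ) • (MvPowerSeries.X 0 * pd 0 f) + (p₂ : ℂ) • (MvPowerSeries.X 1 * pd 1 f)

/-- The normalized Hamiltonian derivation `X₀ = δ⁻¹ (h_y ∂_x − h_x ∂_y)` associated to `h`. -/
def ham (δ : ℕ) (h : A2) (f : A2) : A2 :=
  ((δ : ℂ))⁻¹ • (pd 1 h * pd 0 f - pd 0 h * pd 1 f)

/-- Substitution of a series `h` (with zero constant term) into a one-variable formal power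
series `g`, i.e. `g(h) = Σₖ gₖ hᵏ`: only finitely many `k` contribute to each coefficient. -/
def substPS (h : A2) (g : PowerSeries ℂ) : A2 :=
  fun m => ∑ k ∈ Finset.range ((m.sum fun _ e => e) + 1),
    PowerSeries.coeff k g * MvPowerSeries.coeff m (h ^ k)

open MvPowerSeries Finsupp

lemma coeff_eq (f : A2) (m : Fin 2 →₀ ℕ) : MvPowerSeries.coeff m f = f m := rfl

lemma pd_coeff (i : Fin 2) (f : A2) (m : Fin 2 →₀ ℕ) :
    MvPowerSeries.coeff m (pd i f) =
      (((m i : ℕ) + 1 : ℕ) : ℂ) * MvPowerSeries.coeff (m + Finsupp.single i 1) f := rfl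

lemma pd_add (i : Fin 2) (u v : A2) : pd i (u + v) = pd i u + pd i v := by
  apply MvPowerSeries.ext; intro m
  simp [pd_coeff, map_add, mul_add]

lemma pd_smul (i : Fin 2) (r : ℂ) (u : A2) : pd i (r • u) = r • pd i u := by
  apply MvPowerSeries.ext; intro m
  simp [pd_coeff, MvPowerSeries.coeff_smul]; ring

lemma pd_sub (i : Fin 2) (u v : A2) : pd i (u - v) = pd i u - pd i v := by
  apply MvPowerSeries.ext; intro m
  simp [pd_coeff, map_sub, mul_sub]

lemma pd_comm (u : A2) : pd 0 (pd 1 u) = pd 1 (pd 0 u) := by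
  apply MvPowerSeries.ext; intro m
  simp only [pd_coeff, Finsupp.add_apply, Finsupp.single_apply]
  norm_num
  rw [add_right_comm]
  ring

lemma coeff_X_mul' (i : Fin 2) (u : A2) (m : Fin 2 →₀ ℕ) :
    MvPowerSeries.coeff m (MvPowerSeries.X i * u) =
      if Finsupp.single i 1 ≤ m then MvPowerSeries.coeff (m - Finsupp.single i 1) u else 0 := by
  rw [X_def, coeff_monomial_mul]
  simp

lemma coeff_shift_X_mul (i : Fin 2) (u : A2) (m : Fin 2 →₀ ℕ) :
    MvPowerSeries.coeff (m + Finsupp.single i 1) (MvPowerSeries.X i * u) =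
      MvPowerSeries.coeff m u := by
  rw [add_comm, X_def, coeff_add_monomial_mul, one_mul]

lemma pd_X_same (i : Fin 2) (u : A2) : pd i (X i * u) = u + X i * pd i u := by
  apply MvPowerSeries.ext; intro m
  rw [map_add, pd_coeff, coeff_shift_X_mul, coeff_X_mul']
  by_cases hm : Finsupp.single i 1 ≤ m
  · rw [if_pos hm, pd_coeff]
    have h1 : (1:ℕ) ≤ m i := by simpa using (Finsupp.single_le_iff).1 hm
    have h2 : m - Finsupp.single i 1 + Finsupp.single i 1 = m := tsub_add_cancel_of_le hm
    rw [h2]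
    have h3 : (m - Finsupp.single i 1 : Fin 2 →₀ ℕ) i = m i - 1 := by
      rw [Finsupp.tsub_apply, Finsupp.single_eq_same]
    rw [h3, Nat.sub_add_cancel h1]
    have : ((m i + 1 : ℕ) : ℂ) = ((m i : ℕ) : ℂ) + 1 := by push_cast; ring
    rw [this]; ring
  · rw [if_neg hm]
    have h1 : m i = 0 := by
      by_contra h
      exact hm ((Finsupp.single_le_iff).2 (Nat.one_le_iff_ne_zero.2 h))
    rw [h1]
    norm_num

lemma Rder_coeff (p₁ p₂ : ℕ) (f : A2) (m : Fin 2 →₀ ℕ) :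
    MvPowerSeries.coeff m (Rder p₁ p₂ f) =
      ((p₁ * m 0 + p₂ * m 1 : ℕ) : ℂ) * MvPowerSeries.coeff m f := by
  have key : ∀ i : Fin 2, MvPowerSeries.coeff m (MvPowerSeries.X i * pd i f) =
      ((m i : ℕ) : ℂ) * MvPowerSeries.coeff m f := by
    intro i
    rw [coeff_X_mul']
    by_cases hm : Finsupp.single i 1 ≤ m
    · rw [if_pos hm, pd_coeff, tsub_add_cancel_of_le hm]
      have h1 : (1:ℕ) ≤ m i := by simpa using (Finsupp.single_le_iff).1 hm
      have h3 : (m - Finsupp.single i 1 : Fin 2 →₀ ℕ) i = m i - 1 := by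
        rw [Finsupp.tsub_apply, Finsupp.single_eq_same]
      rw [h3, Nat.sub_add_cancel h1]
    · rw [if_neg hm]
      have h1 : m i = 0 := by
        by_contra h
        exact hm ((Finsupp.single_le_iff).2 (Nat.one_le_iff_ne_zero.2 h))
      rw [h1]
      norm_num
  rw [Rder, map_add, MvPowerSeries.coeff_smul, MvPowerSeries.coeff_smul, key 0, key 1]
  push_cast
  ring

lemma Rder_add (p₁ p₂ : ℕ) (u v : A2) :
    Rder p₁ p₂ (u + v) = Rder p₁ p₂ u + Rder p₁ p₂ v := by
  apply MvPowerSeries.ext; intro m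
  rw [map_add, Rder_coeff, Rder_coeff, Rder_coeff, map_add, mul_add]

lemma Rder_smul (p₁ p₂ : ℕ) (r : ℂ) (u : A2) :
    Rder p₁ p₂ (r • u) = r • Rder p₁ p₂ u := by
  apply MvPowerSeries.ext; intro m
  rw [Rder_coeff, MvPowerSeries.coeff_smul, MvPowerSeries.coeff_smul, Rder_coeff]
  ring

lemma Rder_mul (p₁ p₂ : ℕ) (u v : A2) :
    Rder p₁ p₂ (u * v) = Rder p₁ p₂ u * v + u * Rder p₁ p₂ v := by
  apply MvPowerSeries.ext; intro m
  rw [map_add, Rder_coeff, coeff_mul, coeff_mul, coeff_mul, Finset.mul_sum, ← Finset.sum_add_distrib]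
  apply Finset.sum_congr rfl
  intro p hp
  rw [Finset.HasAntidiagonal.mem_antidiagonal] at hp
  rw [Rder_coeff, Rder_coeff]
  have : ((p₁ * m 0 + p₂ * m 1 : ℕ) : ℂ)
      = ((p₁ * p.1 0 + p₂ * p.1 1 : ℕ) : ℂ) + ((p₁ * p.2 0 + p₂ * p.2 1 : ℕ) : ℂ) := by
    rw [← hp]
    push_cast [Finsupp.add_apply]
    ring
  rw [this]
  ring

lemma Rder_pd (p₁ p₂ : ℕ) (i : Fin 2) (u : A2) :
    Rder p₁ p₂ (pd i u) =
      pd i (Rder p₁ p₂ u) - ((if i = 0 then p₁ else p₂ : ℕ) : ℂ) • pd i u := by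
  apply MvPowerSeries.ext; intro m
  rw [map_sub, Rder_coeff, pd_coeff, pd_coeff, Rder_coeff, MvPowerSeries.coeff_smul, pd_coeff]
  have hadd : ∀ j : Fin 2, ((m + Finsupp.single i 1 : Fin 2 →₀ ℕ) j)
      = m j + (if i = j then 1 else 0) := by
    intro j
    rw [Finsupp.add_apply, Finsupp.single_apply]
  fin_cases i <;> simp only [hadd] <;> norm_num <;> push_cast <;> ring

lemma shift_sum (i : Fin 2) (m : Fin 2 →₀ ℕ) (G : (Fin 2 →₀ ℕ) → (Fin 2 →₀ ℕ) → ℂ) :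
    ∑ p ∈ Finset.HasAntidiagonal.antidiagonal (m + Finsupp.single i 1),
        (((p.1 : Fin 2 →₀ ℕ) i : ℕ) : ℂ) * G p.1 p.2
      = ∑ q ∈ Finset.HasAntidiagonal.antidiagonal m,
          ((((q.1 : Fin 2 →₀ ℕ) i : ℕ) + 1 : ℕ) : ℂ) * G (q.1 + Finsupp.single i 1) q.2 := by
  classical
  set e : Fin 2 →₀ ℕ := Finsupp.single i 1 with he
  set T := (Finset.HasAntidiagonal.antidiagonal m).image (fun q : (Fin 2 →₀ ℕ) × (Fin 2 →₀ ℕ) => (q.1 + e, q.2))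
    with hT
  have hinj : ∀ q ∈ Finset.HasAntidiagonal.antidiagonal m, ∀ q' ∈ Finset.HasAntidiagonal.antidiagonal m,
      (q.1 + e, q.2) = (q'.1 + e, q'.2) → q = q' := by
    intro q _ q' _ hqq
    simp only [Prod.mk.injEq] at hqq
    exact Prod.ext (add_right_cancel hqq.1) hqq.2
  have himg : ∑ p ∈ T, ((p.1 i : ℕ) : ℂ) * G p.1 p.2
      = ∑ q ∈ Finset.HasAntidiagonal.antidiagonal m, (((q.1 + e) i : ℕ) : ℂ) * G (q.1 + e) q.2 :=
    Finset.sum_image hinj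
  have hsub : T ⊆ Finset.HasAntidiagonal.antidiagonal (m + e) := by
    intro p hp
    rw [hT, Finset.mem_image] at hp
    obtain ⟨q, hq, rfl⟩ := hp
    rw [Finset.HasAntidiagonal.mem_antidiagonal] at hq ⊢
    rw [add_right_comm, hq]
  have hzero : ∀ p ∈ Finset.HasAntidiagonal.antidiagonal (m + e), p ∉ T → ((p.1 i : ℕ) : ℂ) * G p.1 p.2 = 0 := by
    intro p hp hpT
    by_cases hp1 : p.1 i = 0
    · rw [hp1]; norm_num
    · exfalso
      apply hpT
      rw [Finset.HasAntidiagonal.mem_antidiagonal] at hp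
      have hle : e ≤ p.1 := by
        rw [he]
        exact Finsupp.single_le_iff.2 (Nat.one_le_iff_ne_zero.2 hp1)
      have hc : p.1 - e + e = p.1 := tsub_add_cancel_of_le hle
      rw [hT, Finset.mem_image]
      refine ⟨(p.1 - e, p.2), ?_, ?_⟩
      · rw [Finset.HasAntidiagonal.mem_antidiagonal]
        have : (p.1 - e + p.2) + e = m + e := by
          rw [add_right_comm, hc, hp]
        exact add_right_cancel this
      · simp [hc]
  rw [← Finset.sum_subset hsub hzero, himg]
  apply Finset.sum_congr rfl
  intro q _
  have : ((q.1 + e : Fin 2 →₀ ℕ) i) = q.1 i + 1 := by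
    rw [Finsupp.add_apply, he, Finsupp.single_eq_same]
  rw [this]

lemma pd_mul (i : Fin 2) (u v : A2) : pd i (u * v) = pd i u * v + u * pd i v := by
  classical
  apply MvPowerSeries.ext; intro m
  rw [map_add, pd_coeff, coeff_mul, coeff_mul, coeff_mul, Finset.mul_sum]
  have split : ∀ p ∈ Finset.HasAntidiagonal.antidiagonal (m + Finsupp.single i 1),
      (((m i : ℕ) + 1 : ℕ) : ℂ) * (MvPowerSeries.coeff p.1 u * MvPowerSeries.coeff p.2 v)
        = ((p.1 i : ℕ) : ℂ) * (MvPowerSeries.coeff p.1 u * MvPowerSeries.coeff p.2 v)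
          + ((p.2 i : ℕ) : ℂ) * (MvPowerSeries.coeff p.1 u * MvPowerSeries.coeff p.2 v) := by
    intro p hp
    rw [Finset.HasAntidiagonal.mem_antidiagonal] at hp
    have : p.1 i + p.2 i = m i + 1 := by
      have := congrArg (fun z : Fin 2 →₀ ℕ => z i) hp
      simpa [Finsupp.add_apply, Finsupp.single_eq_same] using this
    rw [← this]
    push_cast
    ring
  rw [Finset.sum_congr rfl split, Finset.sum_add_distrib]
  congr 1
  · rw [shift_sum i m (fun s t => MvPowerSeries.coeff s u * MvPowerSeries.coeff t v)]
    apply Finset.sum_congr rfl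
    intro q _
    rw [pd_coeff]
    ring
  · rw [Finsupp.sum_antidiagonal_swap (m + Finsupp.single i 1)
        (fun s t => ((t i : ℕ) : ℂ) * (MvPowerSeries.coeff s u * MvPowerSeries.coeff t v))]
    rw [shift_sum i m (fun s t => MvPowerSeries.coeff t u * MvPowerSeries.coeff s v)]
    rw [Finsupp.sum_antidiagonal_swap m
        (fun s t => (((s i : ℕ) + 1 : ℕ) : ℂ)
          * (MvPowerSeries.coeff t u * MvPowerSeries.coeff (s + Finsupp.single i 1) v))]
    apply Finset.sum_congr rfl
    intro q _
    rw [pd_coeff]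
    ring

lemma ham_smul (δ : ℕ) (h : A2) (r : ℂ) (u : A2) : ham δ h (r • u) = r • ham δ h u := by
  unfold ham
  rw [pd_smul, pd_smul, mul_smul_comm, mul_smul_comm, ← smul_sub, smul_comm]

lemma Rder_sub (p₁ p₂ : ℕ) (u v : A2) :
    Rder p₁ p₂ (u - v) = Rder p₁ p₂ u - Rder p₁ p₂ v := by
  apply MvPowerSeries.ext; intro m
  rw [map_sub, Rder_coeff, Rder_coeff, Rder_coeff, map_sub, mul_sub]

lemma comm_lemma (p₁ p₂ δ : ℕ) (h : A2) (hqh : Rder p₁ p₂ h = (δ : ℂ) • h) (u : A2) :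
    Rder p₁ p₂ (ham δ h u) + (p₁ : ℂ) • ham δ h u + (p₂ : ℂ) • ham δ h u
      = ham δ h (Rder p₁ p₂ u + (δ : ℂ) • u) := by
  have hf : Rder p₁ p₂ (pd 0 h) = (δ:ℂ) • pd 0 h - (p₁:ℂ) • pd 0 h := by
    rw [Rder_pd, hqh, pd_smul]
    norm_num
  have hg : Rder p₁ p₂ (pd 1 h) = (δ:ℂ) • pd 1 h - (p₂:ℂ) • pd 1 h := by
    rw [Rder_pd, hqh, pd_smul]
    norm_num
  have h0 : Rder p₁ p₂ (pd 0 u) = pd 0 (Rder p₁ p₂ u) - (p₁:ℂ) • pd 0 u := by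
    rw [Rder_pd]; norm_num
  have h1 : Rder p₁ p₂ (pd 1 u) = pd 1 (Rder p₁ p₂ u) - (p₂:ℂ) • pd 1 u := by
    rw [Rder_pd]; norm_num
  unfold ham
  rw [pd_add, pd_add, pd_smul, pd_smul, Rder_smul, Rder_sub, Rder_mul, Rder_mul,
    hf, hg, h0, h1]
  simp only [Algebra.smul_def]
  ring

lemma invR_solve (p₁ p₂ s : ℕ) (hs : 0 < s) (z : A2) :
    ∃ u : A2, Rder p₁ p₂ u + (s : ℂ) • u = z := by
  refine ⟨@id A2 (fun m => (((p₁ * m 0 + p₂ * m 1 + s : ℕ) : ℂ))⁻¹ * MvPowerSeries.coeff m z), ?_⟩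
  apply MvPowerSeries.ext; intro m
  rw [map_add, Rder_coeff, MvPowerSeries.coeff_smul]
  have hne : ((p₁ * m 0 + p₂ * m 1 + s : ℕ) : ℂ) ≠ 0 := by
    rw [Nat.cast_ne_zero]; omega
  rw [coeff_eq, coeff_eq]
  show ((p₁ * m 0 + p₂ * m 1 : ℕ) : ℂ) * ((((p₁ * m 0 + p₂ * m 1 + s : ℕ) : ℂ))⁻¹ * z m)
      + (s:ℂ) * ((((p₁ * m 0 + p₂ * m 1 + s : ℕ) : ℂ))⁻¹ * z m) = z m
  have hB : ((p₁ * m 0 + p₂ * m 1 : ℕ) : ℂ) + (s:ℂ) = ((p₁ * m 0 + p₂ * m 1 + s : ℕ) : ℂ) := by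
    push_cast; ring
  have : ((p₁ * m 0 + p₂ * m 1 : ℕ) : ℂ) * ((((p₁ * m 0 + p₂ * m 1 + s : ℕ) : ℂ))⁻¹ * z m)
      + (s:ℂ) * ((((p₁ * m 0 + p₂ * m 1 + s : ℕ) : ℂ))⁻¹ * z m)
      = (((p₁ * m 0 + p₂ * m 1 : ℕ) : ℂ) + (s:ℂ))
        * ((((p₁ * m 0 + p₂ * m 1 + s : ℕ) : ℂ))⁻¹ * z m) := by ring
  rw [this, hB, ← mul_assoc, mul_inv_cancel₀ hne, one_mul]

lemma R_inj (p₁ p₂ s : ℕ) (hs : 0 < s) (u v : A2)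
    (huv : Rder p₁ p₂ u + (s : ℂ) • u = Rder p₁ p₂ v + (s : ℂ) • v) : u = v := by
  apply MvPowerSeries.ext; intro m
  have := congrArg (MvPowerSeries.coeff m) huv
  rw [map_add, map_add, Rder_coeff, Rder_coeff, MvPowerSeries.coeff_smul,
    MvPowerSeries.coeff_smul] at this
  have hne : ((p₁ * m 0 + p₂ * m 1 : ℕ) : ℂ) + (s : ℂ) ≠ 0 := by
    have : (((p₁ * m 0 + p₂ * m 1 + s : ℕ)) : ℂ) ≠ 0 := by rw [Nat.cast_ne_zero]; omega
    push_cast at this ⊢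
    exact this
  have heq : (((p₁ * m 0 + p₂ * m 1 : ℕ) : ℂ) + (s : ℂ)) * MvPowerSeries.coeff m u
      = (((p₁ * m 0 + p₂ * m 1 : ℕ) : ℂ) + (s : ℂ)) * MvPowerSeries.coeff m v := by
    rw [add_mul, add_mul]; exact this
  exact mul_left_cancel₀ hne heq

lemma X_pow_ne_zero (i : Fin 2) (N : ℕ) : (MvPowerSeries.X i : A2) ^ N ≠ 0 := by
  apply pow_ne_zero
  intro h0
  have := congrArg (MvPowerSeries.coeff (Finsupp.single i 1)) h0
  rw [coeff_index_single_self_X, map_zero] at this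
  exact one_ne_zero this

lemma Xpow_div (N M : ℕ) (u v : A2)
    (huv : MvPowerSeries.X 1 ^ M * u = MvPowerSeries.X 0 ^ N * v) :
    ∃ t : A2, u = MvPowerSeries.X 0 ^ N * t := by
  classical
  refine ⟨@id A2 (fun m => MvPowerSeries.coeff (m + Finsupp.single 0 N) u), ?_⟩
  apply MvPowerSeries.ext; intro m
  rw [X_pow_eq, coeff_monomial_mul]
  by_cases hm : Finsupp.single (0 : Fin 2) N ≤ m
  · rw [if_pos hm, one_mul, coeff_eq, coeff_eq]
    show u m = u (m - Finsupp.single 0 N + Finsupp.single 0 N)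
    rw [tsub_add_cancel_of_le hm]
  · rw [if_neg hm]
    have := congrArg (MvPowerSeries.coeff (Finsupp.single 1 M + m)) huv
    rw [X_pow_eq, X_pow_eq, coeff_add_monomial_mul, one_mul, coeff_monomial_mul] at this
    rw [coeff_eq] at this
    have hneg : ¬ Finsupp.single (0 : Fin 2) N ≤ Finsupp.single (1 : Fin 2) M + m := by
      intro hle
      apply hm
      rw [Finsupp.single_le_iff] at hle ⊢
      simpa [Finsupp.add_apply, Finsupp.single_apply] using hle
    rw [if_neg hneg] at this
    rw [coeff_eq, this]

lemma constantCoeff_aeval (x : A2) (hx : MvPowerSeries.constantCoeff x = 0)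
    (r : Polynomial ℂ) :
    MvPowerSeries.constantCoeff (Polynomial.aeval x r) = r.coeff 0 := by
  rw [Polynomial.aeval_def, Polynomial.hom_eval₂, hx, Polynomial.eval₂_at_zero]
  simp [MvPowerSeries.algebraMap_apply]

lemma Xpow_mem (I : Ideal A2) (hI : FiniteDimensional ℂ (A2 ⧸ I)) (i : Fin 2) :
    ∃ N : ℕ, (MvPowerSeries.X i : A2) ^ N ∈ I := by
  classical
  set φ : Polynomial ℂ →ₐ[ℂ] A2 ⧸ I :=
    Polynomial.aeval (Ideal.Quotient.mk I (MvPowerSeries.X i)) with hφ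
  have hnotinj : ¬ Function.Injective φ := by
    intro hinj
    exact Polynomial.not_finite (R := ℂ)
      (Module.Finite.of_injective φ.toLinearMap hinj)
  rw [Function.not_injective_iff] at hnotinj
  obtain ⟨q₁, q₂, hq12, hne⟩ := hnotinj
  set q : Polynomial ℂ := q₁ - q₂ with hq
  have hq0 : q ≠ 0 := sub_ne_zero.2 hne
  have hφq : φ q = 0 := by rw [hq, map_sub, hq12, sub_self]
  have hmem : Polynomial.aeval (MvPowerSeries.X i : A2) q ∈ I := by
    rw [← Ideal.Quotient.eq_zero_iff_mem]
    have : (Ideal.Quotient.mkₐ ℂ I) (Polynomial.aeval (MvPowerSeries.X i : A2) q)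
        = Polynomial.aeval ((Ideal.Quotient.mkₐ ℂ I) (MvPowerSeries.X i : A2)) q :=
      (Polynomial.aeval_algHom_apply _ _ _).symm
    rw [Ideal.Quotient.mkₐ_eq_mk] at this
    rw [this]
    exact hφq
  obtain ⟨r, hr, hnd⟩ := q.exists_eq_pow_rootMultiplicity_mul_and_not_dvd hq0 0
  rw [map_zero, sub_zero] at hr hnd
  set k := q.rootMultiplicity 0
  have hr0 : r.coeff 0 ≠ 0 := fun h0 => hnd (Polynomial.X_dvd_iff.2 h0)
  set w : A2 := Polynomial.aeval (MvPowerSeries.X i : A2) r with hw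
  have hwq : Polynomial.aeval (MvPowerSeries.X i : A2) q
      = (MvPowerSeries.X i : A2) ^ k * w := by
    rw [hr, map_mul, map_pow, Polynomial.aeval_X]
  have hwunit : IsUnit w := by
    rw [MvPowerSeries.isUnit_iff_constantCoeff]
    rw [hw, constantCoeff_aeval _ (MvPowerSeries.constantCoeff_X i) r]
    exact isUnit_iff_ne_zero.2 hr0
  obtain ⟨wu, hwu⟩ := hwunit
  refine ⟨k, ?_⟩
  have hXk : (MvPowerSeries.X i : A2) ^ k
      = (Polynomial.aeval (MvPowerSeries.X i : A2) q) * ↑wu⁻¹ := by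
    rw [hwq, mul_assoc, ← hwu, Units.mul_inv, mul_one]
  rw [hXk]
  exact Ideal.mul_mem_right _ _ hmem

lemma ham_eq (δ : ℕ) (h u : A2) :
    ham δ h u = ((δ : ℂ))⁻¹ • (pd 1 h * pd 0 u - pd 0 h * pd 1 u) := rfl

lemma Rder_eq (p₁ p₂ : ℕ) (u : A2) :
    Rder p₁ p₂ u = (p₁ : ℂ) • (MvPowerSeries.X 0 * pd 0 u)
      + (p₂ : ℂ) • (MvPowerSeries.X 1 * pd 1 u) := rfl

/-- Uniqueness in the division lemma: if `a·h = −X₀(b)`, then `a` lies in the image of the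
derivation `X₀`. -/
theorem stmt13 (p₁ p₂ δ : ℕ) (hp₁ : 0 < p₁) (hp₂ : 0 < p₂) (hδ : 0 < δ) (h : A2)
    (hqh : Rder p₁ p₂ h = (δ : ℂ) • h)
    (hiso : FiniteDimensional ℂ (A2 ⧸ Ideal.span {pd 0 h, pd 1 h}))
    (a b : A2) (hab : a * h = -(ham δ h b)) :
    ∃ c : A2, ham δ h c = a := by
  classical
  have hδℂ : (δ:ℂ) ≠ 0 := Nat.cast_ne_zero.2 hδ.ne'
  set P : A2 := pd 0 b + (p₂:ℂ) • (MvPowerSeries.X 1 * a) with hPdef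
  set Q : A2 := pd 1 b - (p₁:ℂ) • (MvPowerSeries.X 0 * a) with hQdef
  have stepA : pd 0 h * Q = pd 1 h * P := by
    have h1 : (δ:ℂ) • (a * h) = pd 0 h * pd 1 b - pd 1 h * pd 0 b := by
      rw [hab, ham_eq, smul_neg, smul_smul, mul_inv_cancel₀ hδℂ, one_smul, neg_sub]
    have h2 : (δ:ℂ) • (a * h)
        = a * ((p₁:ℂ) • (MvPowerSeries.X 0 * pd 0 h) + (p₂:ℂ) • (MvPowerSeries.X 1 * pd 1 h)) := by
      rw [← Rder_eq, hqh, mul_smul_comm]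
    have h3 := h1.symm.trans h2
    rw [hQdef, hPdef]
    simp only [Algebra.smul_def] at h3 ⊢
    linear_combination h3
  obtain ⟨N, hN⟩ := Xpow_mem (Ideal.span {pd 0 h, pd 1 h}) hiso 0
  obtain ⟨M, hM⟩ := Xpow_mem (Ideal.span {pd 0 h, pd 1 h}) hiso 1
  rw [Ideal.mem_span_pair] at hN hM
  obtain ⟨α, β, hαβ⟩ := hN
  obtain ⟨γ, η, hγη⟩ := hM
  have hstep : ∃ c : A2, P = pd 0 h * c ∧ Q = pd 1 h * c := by
    by_cases hf0 : pd 0 h = 0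
    · have hswap : MvPowerSeries.X 1 ^ M * β = MvPowerSeries.X 0 ^ N * η := by
        linear_combination η * hαβ - β * hγη + (β * γ - η * α) * hf0
      obtain ⟨τ, hτ⟩ := Xpow_div N M β η hswap
      have hXg : MvPowerSeries.X 0 ^ N * (τ * pd 1 h) = MvPowerSeries.X 0 ^ N * 1 := by
        linear_combination (-(pd 1 h)) * hτ + hαβ + (-α) * hf0
      have hτg : τ * pd 1 h = 1 := mul_left_cancel₀ (X_pow_ne_zero 0 N) hXg
      have hg0 : pd 1 h ≠ 0 := by
        intro h0; rw [h0, mul_zero] at hτg; exact one_ne_zero hτg.symm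
      have hP0 : P = 0 := by
        have hgp : pd 1 h * P = 0 := by rw [← stepA, hf0, zero_mul]
        rcases mul_eq_zero.1 hgp with h0 | h0
        · exact absurd h0 hg0
        · exact h0
      refine ⟨τ * Q, ?_, ?_⟩
      · rw [hP0, hf0, zero_mul]
      · linear_combination (-Q) * hτg
    · set u : A2 := α * P + β * Q with hu
      set v : A2 := γ * P + η * Q with hv
      have hfu : pd 0 h * u = MvPowerSeries.X 0 ^ N * P := by
        rw [hu]; linear_combination β * stepA + P * hαβ
      have hfv : pd 0 h * v = MvPowerSeries.X 1 ^ M * P := by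
        rw [hv]; linear_combination η * stepA + P * hγη
      have hkey : MvPowerSeries.X 1 ^ M * u = MvPowerSeries.X 0 ^ N * v := by
        apply mul_left_cancel₀ hf0
        linear_combination (MvPowerSeries.X 1 ^ M) * hfu - (MvPowerSeries.X 0 ^ N) * hfv
      obtain ⟨t, ht⟩ := Xpow_div N M u v hkey
      have hPf : P = pd 0 h * t := by
        apply mul_left_cancel₀ (X_pow_ne_zero 0 N)
        linear_combination pd 0 h * ht - hfu
      have hQg : Q = pd 1 h * t := by
        apply mul_left_cancel₀ hf0
        linear_combination stepA + pd 1 h * hPf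
      exact ⟨t, hPf, hQg⟩
  obtain ⟨c, hPc, hQc⟩ := hstep
  have div1 : pd 1 P - pd 0 Q = Rder p₁ p₂ a + (p₁:ℂ) • a + (p₂:ℂ) • a := by
    rw [hPdef, hQdef, pd_add, pd_sub, pd_smul, pd_smul, pd_X_same, pd_X_same,
      ← pd_comm b, Rder_eq]
    simp only [smul_add]
    abel
  have div2 : pd 1 P - pd 0 Q = ham δ h ((-(δ:ℂ)) • c) := by
    rw [ham_smul]
    have hham : (-(δ:ℂ)) • ham δ h c = pd 0 h * pd 1 c - pd 1 h * pd 0 c := by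
      rw [ham_eq, smul_smul, neg_mul, mul_inv_cancel₀ hδℂ, neg_smul, one_smul, neg_sub]
    rw [hham, hPc, hQc, pd_mul, pd_mul]
    have hfg : pd 1 (pd 0 h) = pd 0 (pd 1 h) := (pd_comm h).symm
    rw [hfg]
    ring
  have main : Rder p₁ p₂ a + (p₁:ℂ) • a + (p₂:ℂ) • a = ham δ h ((-(δ:ℂ)) • c) := by
    rw [← div1, div2]
  obtain ⟨u, hu⟩ := invR_solve p₁ p₂ δ hδ ((-(δ:ℂ)) • c)
  have hcomm := comm_lemma p₁ p₂ δ h hqh u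
  rw [hu, ← main] at hcomm
  refine ⟨u, ?_⟩
  apply R_inj p₁ p₂ (p₁ + p₂) (by omega)
  have hcast : ((p₁ + p₂ : ℕ) : ℂ) = (p₁:ℂ) + (p₂:ℂ) := by push_cast; ring
  rw [hcast, add_smul, add_smul, ← add_assoc, ← add_assoc]
  exact hcomm
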